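/- The substitution σ defined below (from the theory of stepped surfaces) is consistent on every C_σ-covered pattern of patt(S_surf) and non-overlapping on every C_σ-covered pattern of patt(S_surf). -/

import Mathlib

open scoped Classical

/-- A combinatorial substitution on alphabet `A` with vectors in `V`:
a base rule sending each letter to a pattern, together with a deterministic
finite set of concatenation rules.  `rule t t' u = some v` encodes the
concatenation rule `(t, t', u) ↦ v`. -/
structure Subst (A : Type*) (V : Type*) [AddCommGroup V] where
  /-- the base rule -/
  base : A → Finset (V × A)
  /-- the image of a letter is a pattern: its cells have distinct vectors -/
  basePat : ∀ t : A, ∀ c ∈ base t, ∀ c' ∈ base t, c.1 = c'.1 → c = c'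
  /-- the concatenation rules, as a partial function -/
  rule : A → A → V → Option V
  /-- there are finitely many concatenation rules -/
  finiteRules : {u : V | ∃ t t', rule t t' u ≠ none}.Finite
  /-- determinism: no two rules with left-hand sides `(t,t',u)` and `(t,t',-u)` -/
  det : ∀ t t' u, (rule t t' u).isSome → (rule t t' (-u)).isSome → u = -u

/-- A pattern is a finite set of cells with pairwise distinct vectors. -/
def IsPattern {V A : Type*} (P : Finset (V × A)) : Prop :=
  ∀ c ∈ P, ∀ c' ∈ P, c.1 = c'.1 → c = c'

namespace Subst

variable {A V : Type*} [AddCommGroup V]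

/-- `σ_rule(c, c')`: the relative position of the images of the two cells
`c`, `c'`, when some concatenation rule applies to them. -/
def ruleVec (σ : Subst A V) (c c' : V × A) : Option V :=
  match σ.rule c.2 c'.2 (c'.1 - c.1) with
  | some v => some v
  | none => (σ.rule c'.2 c.2 (c.1 - c'.1)).map (fun v => -v)

/-- The image vector `ω_σ(γ)` of a path `γ`. -/
def omega (σ : Subst A V) (γ : List (V × A)) : V :=
  ((γ.zip γ.tail).map (fun p => (σ.ruleVec p.1 p.2).getD 0)).sum

/-- A `C_σ`-path: a nonempty sequence of cells in which any two consecutive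
cells form a translated copy of a starting pattern of `σ`, and any two cells
with the same vector are equal. -/
def IsPath (σ : Subst A V) (γ : List (V × A)) : Prop :=
  γ ≠ [] ∧ γ.Chain' (fun c c' => (σ.ruleVec c c').isSome) ∧
    ∀ c ∈ γ, ∀ c' ∈ γ, c.1 = c'.1 → c = c'

/-- A `C_σ`-path of the pattern `P`. -/
def IsPathOf (σ : Subst A V) (P : Finset (V × A)) (γ : List (V × A)) : Prop :=
  σ.IsPath γ ∧ ∀ c ∈ γ, c ∈ P

/-- A `C_σ`-loop of the pattern `P`. -/
def IsLoopOf (σ : Subst A V) (P : Finset (V × A)) (γ : List (V × A)) : Prop :=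
  σ.IsPathOf P γ ∧ γ.head? = γ.getLast?

/-- `P` is `C_σ`-covered: any two of its cells are joined by a `C_σ`-path of `P`. -/
def Covered (σ : Subst A V) (P : Finset (V × A)) : Prop :=
  ∀ c ∈ P, ∀ c' ∈ P,
    ∃ γ, σ.IsPathOf P γ ∧ γ.head? = some c ∧ γ.getLast? = some c'

/-- `σ` is consistent on `P`: any two `C_σ`-paths of `P` with the same first
and last cells have the same image vector. -/
def ConsistentOn (σ : Subst A V) (P : Finset (V × A)) : Prop :=
  ∀ γ γ' : List (V × A), σ.IsPathOf P γ → σ.IsPathOf P γ' →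
    γ.head? = γ'.head? → γ.getLast? = γ'.getLast? → σ.omega γ = σ.omega γ'

/-- `σ` is consistent: it is consistent on every `C_σ`-covered pattern. -/
def Consistent (σ : Subst A V) : Prop :=
  ∀ P : Finset (V × A), IsPattern P → σ.Covered P → σ.ConsistentOn P

/-- The support of the image of a letter. -/
noncomputable def supp (σ : Subst A V) (t : A) : Finset V :=
  (σ.base t).image Prod.fst

/-- `σ` is non-overlapping on `P`: the images of two distinct cells of `P`
joined by a `C_σ`-path of `P` have disjoint supports. -/
def NonOverlappingOn (σ : Subst A V) (P : Finset (V × A)) : Prop :=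
  ∀ c ∈ P, ∀ c' ∈ P, c ≠ c' → ∀ γ, σ.IsPathOf P γ →
    γ.head? = some c → γ.getLast? = some c' →
    ∀ b ∈ σ.supp c'.2, σ.omega γ + b ∉ σ.supp c.2

/-- `σ` is non-overlapping: it is non-overlapping on every `C_σ`-covered pattern. -/
def NonOverlapping (σ : Subst A V) : Prop :=
  ∀ P : Finset (V × A), IsPattern P → σ.Covered P → σ.NonOverlappingOn P

end Subst

/-- The three-letter alphabet `{1, 2, 3}`. -/
inductive L : Type where
  | l1 : L
  | l2 : L
  | l3 : L
deriving DecidableEq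

instance : Fintype L :=
  ⟨⟨{L.l1, L.l2, L.l3}, by decide⟩, fun x => by cases x <;> decide⟩

open L

/-- The horizontal concatenation rules `(t, t', (1,0)) ↦ v`. -/
def hruleS : L → L → Option (ℤ × ℤ)
  | l1, l1 => some (0, 2)
  | l1, l2 => some (0, 2)
  | l1, l3 => some (0, 2)
  | l2, l1 => some (0, 1)
  | l2, l2 => some (0, 1)
  | l2, l3 => none
  | l3, l1 => some (0, 1)
  | l3, l2 => some (0, 1)
  | l3, l3 => some (0, 1)

/-- The vertical concatenation rules `(t, t', (0,1)) ↦ v`. -/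
def vruleS : L → L → Option (ℤ × ℤ)
  | l1, l1 => some (-1, -1)
  | l1, l2 => some (-1, 0)
  | l1, l3 => some (-1, 0)
  | l2, l1 => some (-1, -1)
  | l2, l2 => some (-1, 0)
  | l2, l3 => some (-1, 0)
  | l3, l1 => none
  | l3, l2 => some (-1, -1)
  | l3, l3 => some (-1, -1)

/-- The substitution of Example `mini`, coming from the theory of stepped
surfaces:
`1 ↦ {[(0,0),2], [(0,1),1]}`, `2 ↦ {[(0,0),3]}`, `3 ↦ {[(0,0),1]}`,
with the sixteen concatenation rules `hruleS` and `vruleS`. -/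
noncomputable def sigmaS : Subst L (ℤ × ℤ) where
  base t :=
    match t with
    | l1 => {((0, 0), l2), ((0, 1), l1)}
    | l2 => {((0, 0), l3)}
    | l3 => {((0, 0), l1)}
  basePat := by rintro (_ | _ | _) <;> simp <;> decide
  rule t t' u :=
    if u = ((1 : ℤ), (0 : ℤ)) then hruleS t t'
    else if u = ((0 : ℤ), (1 : ℤ)) then vruleS t t' else none
  finiteRules := by
    apply Set.Finite.subset
      ((Set.finite_singleton (((0 : ℤ), (1 : ℤ)) : ℤ × ℤ)).insert
        (((1 : ℤ), (0 : ℤ)) : ℤ × ℤ))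
    rintro u ⟨t, t', h⟩
    try simp only at h
    split_ifs at h with h1 h2
    · exact Set.mem_insert_iff.2 (Or.inl h1)
    · exact Set.mem_insert_iff.2 (Or.inr h2)
    · exact absurd rfl h
  det := by
    intro t t' u h1 h2
    exfalso
    try simp only at h1 h2
    have hu : u = ((1 : ℤ), (0 : ℤ)) ∨ u = ((0 : ℤ), (1 : ℤ)) := by
      split_ifs at h1 with hA hB
      · exact Or.inl hA
      · exact Or.inr hB
      · simp at h1
    have hnu : -u = ((1 : ℤ), (0 : ℤ)) ∨ -u = ((0 : ℤ), (1 : ℤ)) := by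
      split_ifs at h2 with hC hD
      · exact Or.inl hC
      · exact Or.inr hD
      · simp at h2
    rcases hu with rfl | rfl <;> rcases hnu with h | h <;> revert h <;> decide

/-- The 28 allowed `2 × 2` patterns, written
(bottom-left, bottom-right, top-left, top-right). -/
def allowedSurf : List (L × L × L × L) :=
  [(l1, l1, l1, l1), (l1, l1, l2, l1), (l1, l1, l3, l1),
   (l1, l2, l1, l1), (l1, l2, l2, l1), (l1, l2, l3, l1),
   (l1, l3, l1, l2), (l1, l3, l1, l3), (l1, l3, l2, l2),
   (l1, l3, l3, l2), (l1, l3, l3, l3),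
   (l2, l1, l1, l2), (l2, l1, l1, l3), (l2, l1, l2, l2),
   (l2, l1, l3, l2), (l2, l1, l3, l3),
   (l2, l2, l1, l2), (l2, l2, l1, l3), (l2, l2, l2, l2),
   (l2, l2, l3, l2), (l2, l2, l3, l3),
   (l3, l1, l2, l1), (l3, l1, l3, l1),
   (l3, l2, l2, l1), (l3, l2, l3, l1),
   (l3, l3, l2, l2), (l3, l3, l3, l2), (l3, l3, l3, l3)]

/-- The set of configurations whose `2 × 2` sub-patterns are all allowed:
codings of stepped surfaces. -/
def Ssurf : Set ((ℤ × ℤ) → L) :=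
  {x | ∀ v : ℤ × ℤ, (x v, x (v + (1, 0)), x (v + (0, 1)), x (v + (1, 1))) ∈ allowedSurf}

/-- The pattern `P` appears in the configuration `x` (up to a translation). -/
def AppearsIn (x : (ℤ × ℤ) → L) (P : Finset ((ℤ × ℤ) × L)) : Prop :=
  ∃ w : ℤ × ℤ, ∀ c ∈ P, x (c.1 + w) = c.2

/-- The pattern `P` appears in some configuration of `S`. -/
def AppearsInSys (S : Set ((ℤ × ℤ) → L)) (P : Finset ((ℤ × ℤ) × L)) : Prop :=
  ∃ x ∈ S, AppearsIn x P

section Aux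
open L

/-- horizontal increment -/
def hval : L → ℤ
  | l1 => 2
  | l2 => 1
  | l3 => 1

/-- vertical increment -/
def gval : L → L → ℤ
  | l1, l1 => -1
  | l1, l2 => 0
  | l1, l3 => 0
  | l2, l1 => -1
  | l2, l2 => 0
  | l2, l3 => 0
  | l3, l1 => 0
  | l3, l2 => -1
  | l3, l3 => -1

lemma hval_ge_one (t : L) : 1 ≤ hval t := by cases t <;> decide

lemma hrule_eq {t t' : L} {v : ℤ × ℤ} (h : hruleS t t' = some v) : v = (0, hval t) := by
  cases t <;> cases t' <;> simp_all [hruleS, hval]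

lemma vrule_eq {t t' : L} {v : ℤ × ℤ} (h : vruleS t t' = some v) : v = (-1, gval t t') := by
  cases t <;> cases t' <;> simp_all [vruleS, gval]

lemma comm_key : ∀ a b c d : L, (a, b, c, d) ∈ allowedSurf →
    hval a + gval b d = gval a c + hval c := by decide

/-- signed partial sum of `f` over `[0, m)` (negatively over `[m, 0)`). -/
def sgnSum (f : ℤ → ℤ) (m : ℤ) : ℤ :=
  (Finset.range m.toNat).sum (fun i => f i) -
    (Finset.range (-m).toNat).sum (fun i => f (-1 - i))

lemma sgnSum_zero (f : ℤ → ℤ) : sgnSum f 0 = 0 := by simp [sgnSum]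

lemma sgnSum_succ (f : ℤ → ℤ) (m : ℤ) : sgnSum f (m + 1) = sgnSum f m + f m := by
  unfold sgnSum
  rcases le_or_gt 0 m with hm | hm
  · have h1 : (m + 1).toNat = m.toNat + 1 := by omega
    have h2 : (-m).toNat = 0 := by omega
    have h3 : (-(m + 1)).toNat = 0 := by omega
    rw [h1, h2, h3, Finset.sum_range_succ]
    have h4 : (m.toNat : ℤ) = m := by omega
    rw [h4]; simp
  · have h1 : (m + 1).toNat = 0 := by omega
    have h2 : m.toNat = 0 := by omega
    have h3 : (-m).toNat = (-(m + 1)).toNat + 1 := by omega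
    rw [h1, h2, h3, Finset.sum_range_succ]
    have h4 : (-1 - ((-(m + 1)).toNat : ℤ)) = m := by omega
    rw [h4]; ring

/-- the second coordinate of the potential function associated with `x`. -/
def phi2 (x : (ℤ × ℤ) → L) (v : ℤ × ℤ) : ℤ :=
  sgnSum (fun k => hval (x (k, v.2))) v.1 +
    sgnSum (fun j => gval (x (0, j)) (x (0, j + 1))) v.2

lemma phi2_hstep (x : (ℤ × ℤ) → L) (m n : ℤ) :
    phi2 x (m + 1, n) = phi2 x (m, n) + hval (x (m, n)) := by
  simp only [phi2]
  rw [sgnSum_succ]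
  ring

lemma comm_Ssurf {x : (ℤ × ℤ) → L} (hx : x ∈ Ssurf) (m n : ℤ) :
    hval (x (m, n)) + gval (x (m + 1, n)) (x (m + 1, n + 1)) =
      gval (x (m, n)) (x (m, n + 1)) + hval (x (m, n + 1)) := by
  have h := hx (m, n)
  simp only [Prod.mk_add_mk, add_zero, zero_add] at h
  exact comm_key _ _ _ _ h

lemma phi2_vstep {x : (ℤ × ℤ) → L} (hx : x ∈ Ssurf) (m n : ℤ) :
    phi2 x (m, n + 1) = phi2 x (m, n) + gval (x (m, n)) (x (m, n + 1)) := by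
  have key : ∀ m : ℤ,
      sgnSum (fun k => hval (x (k, n + 1))) m - sgnSum (fun k => hval (x (k, n))) m
        + gval (x (0, n)) (x (0, n + 1)) = gval (x (m, n)) (x (m, n + 1)) := by
    have up : ∀ m : ℤ,
        (sgnSum (fun k => hval (x (k, n + 1))) m - sgnSum (fun k => hval (x (k, n))) m
          + gval (x (0, n)) (x (0, n + 1)) = gval (x (m, n)) (x (m, n + 1))) →
        (sgnSum (fun k => hval (x (k, n + 1))) (m + 1)
          - sgnSum (fun k => hval (x (k, n))) (m + 1)
          + gval (x (0, n)) (x (0, n + 1)) = gval (x (m + 1, n)) (x (m + 1, n + 1))) := by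
      intro m hm
      rw [sgnSum_succ, sgnSum_succ]
      have := comm_Ssurf hx m n
      linarith
    have down : ∀ m : ℤ,
        (sgnSum (fun k => hval (x (k, n + 1))) (m + 1)
          - sgnSum (fun k => hval (x (k, n))) (m + 1)
          + gval (x (0, n)) (x (0, n + 1)) = gval (x (m + 1, n)) (x (m + 1, n + 1))) →
        (sgnSum (fun k => hval (x (k, n + 1))) m - sgnSum (fun k => hval (x (k, n))) m
          + gval (x (0, n)) (x (0, n + 1)) = gval (x (m, n)) (x (m, n + 1))) := by
      intro m hm
      rw [sgnSum_succ, sgnSum_succ] at hm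
      have := comm_Ssurf hx m n
      linarith
    intro m
    induction m using Int.induction_on with
    | zero => rw [sgnSum_zero, sgnSum_zero]; ring
    | succ i ih => exact up i ih
    | pred i ih =>
        have := down (-(i : ℤ) - 1)
        simp only [sub_add_cancel] at this
        exact this ih
  simp only [phi2]
  rw [sgnSum_succ]
  have := key m
  linarith

/-- the potential function. -/
def Phi (x : (ℤ × ℤ) → L) (u : ℤ × ℤ) : ℤ × ℤ := (-u.2, phi2 x u)

lemma sigmaS_rule_cases {t t' : L} {d v : ℤ × ℤ} (h : sigmaS.rule t t' d = some v) :
    (d = (1, 0) ∧ hruleS t t' = some v) ∨ (d = (0, 1) ∧ vruleS t t' = some v) := by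
  simp only [sigmaS] at h
  split_ifs at h with h1 h2
  · exact Or.inl ⟨h1, h⟩
  · exact Or.inr ⟨h2, h⟩

lemma rule_step {x : (ℤ × ℤ) → L} (hx : x ∈ Ssurf) {u d v : ℤ × ℤ}
    (h : sigmaS.rule (x u) (x (u + d)) d = some v) :
    v = Phi x (u + d) - Phi x u := by
  rcases sigmaS_rule_cases h with ⟨hd, h⟩ | ⟨hd, h⟩
  · subst hd
    have hu : u + ((1 : ℤ), (0 : ℤ)) = (u.1 + 1, u.2) := by
      rw [Prod.ext_iff]; constructor <;> simp
    rw [hu] at h ⊢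
    rw [hrule_eq h]
    have hp := phi2_hstep x u.1 u.2
    have hxu : ((u.1, u.2) : ℤ × ℤ) = u := rfl
    rw [hxu] at hp
    rw [Prod.ext_iff]
    refine ⟨?_, ?_⟩
    · show (0 : ℤ) = -u.2 - -u.2
      ring
    · show hval (x u) = phi2 x (u.1 + 1, u.2) - phi2 x u
      rw [hp]; ring
  · subst hd
    have hu : u + ((0 : ℤ), (1 : ℤ)) = (u.1, u.2 + 1) := by
      rw [Prod.ext_iff]; constructor <;> simp
    rw [hu] at h ⊢
    rw [vrule_eq h]
    have hp := phi2_vstep hx u.1 u.2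
    have hxu : ((u.1, u.2) : ℤ × ℤ) = u := rfl
    rw [hxu] at hp
    rw [Prod.ext_iff]
    refine ⟨?_, ?_⟩
    · show (-1 : ℤ) = -(u.2 + 1) - -u.2
      ring
    · show gval (x u) (x (u.1, u.2 + 1)) = phi2 x (u.1, u.2 + 1) - phi2 x u
      rw [hp]; ring

lemma ruleVec_step {x : (ℤ × ℤ) → L} (hx : x ∈ Ssurf) {w : ℤ × ℤ}
    {c c' : (ℤ × ℤ) × L} (hc : x (c.1 + w) = c.2) (hc' : x (c'.1 + w) = c'.2)
    {v : ℤ × ℤ} (h : sigmaS.ruleVec c c' = some v) :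
    v = Phi x (c'.1 + w) - Phi x (c.1 + w) := by
  unfold Subst.ruleVec at h
  have e1 : c'.1 + w = (c.1 + w) + (c'.1 - c.1) := by ring
  have e2 : c.1 + w = (c'.1 + w) + (c.1 - c'.1) := by ring
  cases hr : sigmaS.rule c.2 c'.2 (c'.1 - c.1) with
  | some v0 =>
      rw [hr] at h
      have hv : v0 = v := by simpa using h
      subst hv
      have h' : sigmaS.rule (x (c.1 + w)) (x ((c.1 + w) + (c'.1 - c.1))) (c'.1 - c.1)
          = some v0 := by rw [hc, ← e1, hc']; exact hr
      have := rule_step hx h'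
      rw [this, ← e1]
  | none =>
      rw [hr] at h
      simp only [Option.map_eq_some_iff] at h
      obtain ⟨v', hv', rfl⟩ := h
      have h' : sigmaS.rule (x (c'.1 + w)) (x ((c'.1 + w) + (c.1 - c'.1))) (c.1 - c'.1)
          = some v' := by rw [hc', ← e2, hc]; exact hv'
      have := rule_step hx h'
      rw [this, ← e2]
      ring

lemma omega_telescope {x : (ℤ × ℤ) → L} (hx : x ∈ Ssurf) (w : ℤ × ℤ) :
    ∀ γ : List ((ℤ × ℤ) × L),
      γ.Chain' (fun c c' => (sigmaS.ruleVec c c').isSome) →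
      (∀ c ∈ γ, x (c.1 + w) = c.2) →
      ∀ {c c' : (ℤ × ℤ) × L}, γ.head? = some c → γ.getLast? = some c' →
      sigmaS.omega γ = Phi x (c'.1 + w) - Phi x (c.1 + w) := by
  intro γ
  induction γ with
  | nil => intro _ _ c c' hh _; simp at hh
  | cons a l ih =>
      cases l with
      | nil =>
          intro _ _ c c' hh hl
          simp only [List.head?_cons, Option.some.injEq] at hh
          simp only [List.getLast?_singleton, Option.some.injEq] at hl
          subst hh; subst hl
          simp [Subst.omega]
      | cons b l' =>
          intro hch hmem c c' hh hl
          simp only [List.head?_cons, Option.some.injEq] at hh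
          subst hh
          rw [List.Chain', List.isChain_cons_cons] at hch
          obtain ⟨hab, hch'⟩ := hch
          obtain ⟨v, hv⟩ := Option.isSome_iff_exists.1 hab
          have hmem' : ∀ c ∈ b :: l', x (c.1 + w) = c.2 := fun c hc =>
            hmem c (List.mem_cons_of_mem a hc)
          have hl' : (b :: l').getLast? = some c' := by
            rw [List.getLast?_cons_cons] at hl; exact hl
          have hrec := ih hch' hmem' (c := b) rfl hl'
          have hstep := ruleVec_step hx (hmem a (List.mem_cons_self (a := a)))
            (hmem b (List.mem_cons_of_mem a (List.mem_cons_self (a := b)))) hv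
          have homega : sigmaS.omega (a :: b :: l') =
              (sigmaS.ruleVec a b).getD 0 + sigmaS.omega (b :: l') := by
            simp [Subst.omega]
          rw [homega, hv, hrec, Option.getD_some, hstep]
          ring

lemma mem_supp_iff {t : L} {b : ℤ × ℤ} :
    b ∈ sigmaS.supp t ↔ b = (0, 0) ∨ (t = l1 ∧ b = (0, 1)) := by
  cases t <;> simp [Subst.supp, sigmaS, Finset.mem_image]

lemma phi2_ge (x : (ℤ × ℤ) → L) (m n : ℤ) :
    ∀ d : ℕ, phi2 x (m, n) + d ≤ phi2 x (m + d, n) := by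
  intro d
  induction d with
  | zero => simp
  | succ k ih =>
      have e : m + ((k : ℤ) + 1) = (m + k) + 1 := by ring
      push_cast
      rw [e, phi2_hstep]
      have := hval_ge_one (x (m + k, n))
      push_cast at ih
      linarith

lemma phi2_gap {x : (ℤ × ℤ) → L} (m m' n : ℤ) (hlt : m < m') :
    phi2 x (m, n) + hval (x (m, n)) ≤ phi2 x (m', n) := by
  have hge := phi2_ge x (m + 1) n (m' - m - 1).toNat
  have hd : (m + 1) + ((m' - m - 1).toNat : ℤ) = m' := by omega
  rw [hd, phi2_hstep x m n] at hge
  have h0 : (0 : ℤ) ≤ ((m' - m - 1).toNat : ℤ) := Int.ofNat_nonneg _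
  linarith

lemma final_contra {x : (ℤ × ℤ) → L} (hx : x ∈ Ssurf) {m m' n : ℤ} (hmm : m ≠ m')
    {c2 c2' : L} (hcx : x (m, n) = c2) (hcx' : x (m', n) = c2')
    {b2 e : ℤ} (hb2 : 0 ≤ b2) (hb2' : b2 ≤ 1) (hb2l : b2 = 1 → c2' = l1)
    (he : 0 ≤ e) (he' : e ≤ 1) (hel : e = 1 → c2 = l1)
    (heq : phi2 x (m', n) - phi2 x (m, n) + b2 = e) : False := by
  rcases lt_or_gt_of_ne hmm with h | h
  · have hgap := phi2_gap (x := x) m m' n h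
    rw [hcx] at hgap
    have h1 := hval_ge_one c2
    by_cases hc1 : c2 = l1
    · have h2 : hval c2 = 2 := by rw [hc1]; rfl
      linarith
    · have he0 : e = 0 := by
        by_contra h0
        exact hc1 (hel (by omega))
      linarith
  · have hgap := phi2_gap (x := x) m' m n h
    rw [hcx'] at hgap
    have h1 := hval_ge_one c2'
    by_cases hc1 : c2' = l1
    · have h2 : hval c2' = 2 := by rw [hc1]; rfl
      linarith
    · have hb0 : b2 = 0 := by
        by_contra h0
        exact hc1 (hb2l (by omega))
      linarith

end Aux


/-- Proposition `mini`.  The stepped-surface substitution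
`σ` is consistent and non-overlapping on every `C_σ`-covered pattern of
`patt(S_surf)`. -/
theorem sigmaS_consistent_and_nonOverlapping :
    ∀ P : Finset ((ℤ × ℤ) × L), IsPattern P → AppearsInSys Ssurf P →
      sigmaS.Covered P → sigmaS.ConsistentOn P ∧ sigmaS.NonOverlappingOn P := by
  rintro P hPat ⟨x, hx, w, hw⟩ _hCov
  constructor
  · -- consistency
    intro γ γ' hγ hγ' hh hl
    obtain ⟨⟨hne, hch, _⟩, hmem⟩ := hγ
    obtain ⟨⟨hne', hch', _⟩, hmem'⟩ := hγ'
    obtain ⟨c, hc⟩ : ∃ c, γ.head? = some c := by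
      cases γ with
      | nil => exact absurd rfl hne
      | cons a l => exact ⟨a, rfl⟩
    obtain ⟨c', hc'⟩ : ∃ c', γ.getLast? = some c' :=
      Option.isSome_iff_exists.1 (List.getLast?_isSome.2 hne)
    have hch2 : γ'.head? = some c := by rw [← hh]; exact hc
    have hcl2 : γ'.getLast? = some c' := by rw [← hl]; exact hc'
    rw [omega_telescope hx w γ hch (fun e he => hw e (hmem e he)) hc hc',
      omega_telescope hx w γ' hch' (fun e he => hw e (hmem' e he)) hch2 hcl2]
  · -- non-overlapping
    intro c hc c' hc' hne γ hγ hh hl b hb hmem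
    obtain ⟨⟨_, hch, _⟩, hmemγ⟩ := hγ
    have homega := omega_telescope hx w γ hch (fun e he => hw e (hmemγ e he)) hh hl
    have hcx : x (c.1 + w) = c.2 := hw c hc
    have hcx' : x (c'.1 + w) = c'.2 := hw c' hc'
    rw [homega, mem_supp_iff] at hmem
    rw [mem_supp_iff] at hb
    have hb1 : b.1 = 0 := by rcases hb with rfl | ⟨_, rfl⟩ <;> rfl
    have hb2lo : 0 ≤ b.2 := by rcases hb with rfl | ⟨_, rfl⟩ <;> norm_num
    have hb2hi : b.2 ≤ 1 := by rcases hb with rfl | ⟨_, rfl⟩ <;> norm_num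
    have hb2l : b.2 = 1 → c'.2 = l1 := by
      rcases hb with rfl | ⟨h, rfl⟩
      · intro h; norm_num at h
      · exact fun _ => h
    -- extract the two coordinates of the overlap equation
    have key : ∃ e : ℤ, 0 ≤ e ∧ e ≤ 1 ∧ (e = 1 → c.2 = l1) ∧
        (Phi x (c'.1 + w) - Phi x (c.1 + w) + b).1 = 0 ∧
        (Phi x (c'.1 + w) - Phi x (c.1 + w) + b).2 = e := by
      rcases hmem with heq | ⟨h1, heq⟩
      · exact ⟨0, le_refl 0, by norm_num, by intro h; norm_num at h,
          by rw [heq], by rw [heq]⟩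
      · exact ⟨1, by norm_num, le_refl 1, fun _ => h1, by rw [heq], by rw [heq]⟩
    obtain ⟨e, he0, he1, hel, hfst, hsnd⟩ := key
    simp only [Phi, Prod.fst_sub, Prod.snd_sub, Prod.fst_add, Prod.snd_add] at hfst hsnd
    -- from the first coordinate, the two cells lie in the same row
    have hn : c.1.2 = c'.1.2 := by omega
    have hne1 : c.1.1 ≠ c'.1.1 := by
      intro h11
      exact hne (hPat c hc c' hc' (Prod.ext h11 hn))
    have hmm : c.1.1 + w.1 ≠ c'.1.1 + w.1 := by omega
    have ec : c.1 + w = (c.1.1 + w.1, c.1.2 + w.2) := rfl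
    have ec' : c'.1 + w = (c'.1.1 + w.1, c.1.2 + w.2) := by
      rw [Prod.ext_iff]
      exact ⟨rfl, by simp [hn]⟩
    rw [ec] at hcx
    rw [ec'] at hcx'
    rw [ec, ec'] at hsnd
    exact final_contra hx hmm hcx hcx' hb2lo hb2hi hb2l he0 he1 hel hsnd
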